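/- Let R_Z(x) = Σ_{i=1}^N a_i e^{-|x − z_i|} with a_i > 0 and |z_i − z_{i−1}| ≥ L/2. Then for any u ∈ H¹(ℝ): ‖u‖²_{H¹} − Σ_{i=1}^N 2a_i² = ‖u − R_Z‖²_{H¹} + 4Σ_{i=1}^N a_i(u(z_i) − a_i) + O(e^{−L/4}). -/

import Mathlib

open MeasureTheory Real Set Filter

lemma msign : Measurable Real.sign := by
  have : Real.sign = fun r : ℝ => if r < 0 then (-1:ℝ) else if 0 < r then 1 else 0 :=
    funext fun r => rfl
  rw [this]
  exact Measurable.ite measurableSet_Iio measurable_const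
    (Measurable.ite measurableSet_Ioi measurable_const measurable_const)

lemma abs_sign_le (r : ℝ) : |Real.sign r| ≤ 1 := by
  rcases lt_trichotomy r 0 with h|h|h
  · simp [Real.sign_of_neg h]
  · simp [h]
  · simp [Real.sign_of_pos h]

lemma intOn_exp_Ioi (c s b : ℝ) (hc : 0 < c) :
    IntegrableOn (fun x : ℝ => Real.exp (s - c*x)) (Ioi b) := by
  have h1 : IntegrableOn (fun x : ℝ => Real.exp (-c*x)) (Ioi b) :=
    exp_neg_integrableOn_Ioi b hc
  have h2 : IntegrableOn (fun x : ℝ => Real.exp s * Real.exp (-c*x)) (Ioi b) :=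
    h1.const_mul (Real.exp s)
  refine h2.congr_fun (fun x _ => ?_) measurableSet_Ioi
  dsimp only; rw [← Real.exp_add]; ring_nf

lemma intOn_exp_Iic (c s a : ℝ) (hc : 0 < c) :
    IntegrableOn (fun x : ℝ => Real.exp (c*x - s)) (Iic a) := by
  have h0 : IntegrableOn (fun x : ℝ => Real.exp (-(c*x) - s)) (Ioi (-a)) := by
    have h1 : IntegrableOn (fun x : ℝ => Real.exp (-c*x)) (Ioi (-a)) :=
      exp_neg_integrableOn_Ioi (-a) hc
    have h2 : IntegrableOn (fun x : ℝ => Real.exp (-s) * Real.exp (-c*x)) (Ioi (-a)) :=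
      h1.const_mul (Real.exp (-s))
    refine h2.congr_fun (fun x _ => ?_) measurableSet_Ioi
    dsimp only; rw [← Real.exp_add]; ring_nf
  have h2 : IntegrableOn ((fun x : ℝ => Real.exp (-(c*x) - s)) ∘ Neg.neg) (Neg.neg ⁻¹' Ioi (-a)) :=
    (MeasurePreserving.integrableOn_comp_preimage
      (Measure.measurePreserving_neg (volume : Measure ℝ))
      (Homeomorph.neg ℝ).measurableEmbedding).2 h0
  have h3 : (Neg.neg ⁻¹' Ioi (-a) : Set ℝ) = Iio a := by ext x; simp
  rw [h3] at h2
  rw [integrableOn_Iic_iff_integrableOn_Iio]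
  refine h2.congr_fun (fun x _ => ?_) measurableSet_Iio
  simp only [Function.comp]; ring_nf

lemma int_exp_Ioi (s b : ℝ) : ∫ x in Ioi b, Real.exp (s - 2*x) = Real.exp (s - 2*b)/2 := by
  have hderiv : ∀ x ∈ Ici b, HasDerivAt (fun y => -Real.exp (s - 2*y)/2) (Real.exp (s - 2*x)) x := by
    intro x _
    have h1 : HasDerivAt (fun y : ℝ => s - 2*y) (-2) x := by
      simpa using ((hasDerivAt_id x).const_mul 2).const_sub s
    have h2 := (h1.exp.neg.div_const 2)
    exact h2.congr_deriv (by ring)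
  have htend : Tendsto (fun y => -Real.exp (s - 2*y)/2) atTop (nhds 0) := by
    have h1 : Tendsto (fun y : ℝ => s - 2*y) atTop atBot := by
      apply tendsto_atBot_add_const_left atTop s
      exact (tendsto_neg_atTop_atBot).comp (tendsto_id.const_mul_atTop (by norm_num : (0:ℝ) < 2))
    have h2 := (Real.tendsto_exp_atBot.comp h1).neg.div_const 2
    simpa [Function.comp] using h2
  have := integral_Ioi_of_hasDerivAt_of_tendsto' hderiv (intOn_exp_Ioi 2 s b (by norm_num)) htend
  rw [this]; ring

lemma int_exp_Iic (s a : ℝ) : ∫ x in Iic a, Real.exp (2*x - s) = Real.exp (2*a - s)/2 := by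
  have hderiv : ∀ x ∈ Iic a, HasDerivAt (fun y => Real.exp (2*y - s)/2) (Real.exp (2*x - s)) x := by
    intro x _
    have h1 : HasDerivAt (fun y : ℝ => 2*y - s) 2 x := by
      simpa using ((hasDerivAt_id x).const_mul 2).sub_const s
    have h2 := (h1.exp.div_const 2)
    exact h2.congr_deriv (by ring)
  have htend : Tendsto (fun y => Real.exp (2*y - s)/2) atBot (nhds 0) := by
    have h1 : Tendsto (fun y : ℝ => 2*y - s) atBot atBot := by
      apply tendsto_atBot_add_const_right atBot (-s)
      exact (tendsto_id.const_mul_atBot (by norm_num : (0:ℝ) < 2))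
    have h2 := (Real.tendsto_exp_atBot.comp h1).div_const 2
    simpa [Function.comp] using h2
  have := integral_Iic_of_hasDerivAt_of_tendsto' hderiv (intOn_exp_Iic 2 s a (by norm_num)) htend
  rw [this]; ring

lemma integrable_E (z : ℝ) : Integrable (fun x : ℝ => Real.exp (-|x - z|)) := by
  have hIic : IntegrableOn (fun x : ℝ => Real.exp (-|x - z|)) (Iic z) := by
    refine (intOn_exp_Iic 1 z z one_pos).congr_fun (fun x hx => ?_) measurableSet_Iic
    rw [abs_of_nonpos (by simpa using hx)]
    ring_nf
  have hIoi : IntegrableOn (fun x : ℝ => Real.exp (-|x - z|)) (Ioi z) := by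
    refine (intOn_exp_Ioi 1 z z one_pos).congr_fun (fun x hx => ?_) measurableSet_Ioi
    rw [abs_of_pos (by simpa using hx)]
    ring_nf
  rw [← integrableOn_univ, ← Iic_union_Ioi (a := z)]
  exact hIic.union hIoi

lemma integrable_E2 (z : ℝ) : Integrable (fun x : ℝ => Real.exp (-|x - z|) * Real.exp (-|x - z|)) := by
  refine (integrable_E z).mono' ((Real.continuous_exp.comp (continuous_abs.comp
    (continuous_id.sub continuous_const)).neg).mul (Real.continuous_exp.comp (continuous_abs.comp
    (continuous_id.sub continuous_const)).neg)).aestronglyMeasurable (Filter.Eventually.of_forall fun x => ?_)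
  rw [norm_mul, Real.norm_eq_abs, abs_of_pos (Real.exp_pos _)]
  have h1 : Real.exp (-|x - z|) ≤ 1 := Real.exp_le_one_iff.mpr (neg_nonpos.mpr (abs_nonneg _))
  nlinarith [Real.exp_pos (-|x - z|)]

section Pairing
variable (z : ℝ) (u u' : ℝ → ℝ)

lemma intg_uE (hcu : Continuous u) (hu2 : Integrable (fun x => (u x)^2)) :
    Integrable (fun x => u x * Real.exp (-|x - z|)) := by
  refine ((hu2.add (integrable_E z)).div_const 2).mono'
    ((hcu.mul (Real.continuous_exp.comp (continuous_abs.comp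
      (continuous_id.sub continuous_const)).neg)).aestronglyMeasurable)
    (Filter.Eventually.of_forall fun x => ?_)
  rw [norm_mul, Real.norm_eq_abs, Real.norm_eq_abs, abs_of_pos (Real.exp_pos _)]
  simp only [Pi.add_apply]
  have h1 : Real.exp (-|x - z|) ≤ 1 := Real.exp_le_one_iff.mpr (neg_nonpos.mpr (abs_nonneg _))
  have h2 := Real.exp_pos (-|x - z|)
  have h3 : |u x|^2 = (u x)^2 := sq_abs _
  nlinarith [sq_nonneg (|u x| - Real.exp (-|x - z|)), abs_nonneg (u x),
    mul_le_mul_of_nonneg_left h1 h2.le]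

lemma intg_u'S (hmu' : AEStronglyMeasurable u') (hu'2 : Integrable (fun x => (u' x)^2)) :
    Integrable (fun x => u' x * (-Real.sign (x - z) * Real.exp (-|x - z|))) := by
  refine ((hu'2.add (integrable_E z)).div_const 2).mono'
    (hmu'.mul ((((msign.comp (measurable_id.sub_const z)).neg).mul
      ((Real.continuous_exp.comp (continuous_abs.comp
        (continuous_id.sub continuous_const)).neg).measurable)).aestronglyMeasurable))
    (Filter.Eventually.of_forall fun x => ?_)
  rw [norm_mul, Real.norm_eq_abs, Real.norm_eq_abs, abs_mul, abs_neg,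
    abs_of_pos (Real.exp_pos _)]
  simp only [Pi.add_apply]
  have h1 : Real.exp (-|x - z|) ≤ 1 := Real.exp_le_one_iff.mpr (neg_nonpos.mpr (abs_nonneg _))
  have h2 := Real.exp_pos (-|x - z|)
  have h4 := abs_sign_le (x - z)
  have h5 := abs_nonneg (Real.sign (x - z))
  have h3 : |u' x|^2 = (u' x)^2 := sq_abs _
  have h6 : |Real.sign (x - z)| * Real.exp (-|x - z|) ≤ Real.exp (-|x - z|) := by nlinarith
  have h7 : |u' x| * (|Real.sign (x - z)| * Real.exp (-|x - z|)) ≤ |u' x| * Real.exp (-|x - z|) := by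
    apply mul_le_mul_of_nonneg_left h6 (abs_nonneg _)
  refine h7.trans ?_
  nlinarith [sq_nonneg (|u' x| - Real.exp (-|x - z|)), abs_nonneg (u' x),
    mul_le_mul_of_nonneg_left h1 h2.le]

lemma pairing (hu : ∀ x, HasDerivAt u (u' x) x)
    (hu2 : Integrable (fun x => (u x)^2)) (hu'2 : Integrable (fun x => (u' x)^2))
    (ht : Filter.Tendsto u Filter.atTop (nhds 0)) (hb : Filter.Tendsto u Filter.atBot (nhds 0)) :
    ∫ x, (u x * Real.exp (-|x - z|) + u' x * (-Real.sign (x - z) * Real.exp (-|x - z|)))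
      = 2 * u z := by
  have hcu : Continuous u := by
    rw [continuous_iff_continuousAt]; exact fun x => (hu x).continuousAt
  have hmu' : AEStronglyMeasurable u' := by
    have : u' = deriv u := funext fun x => ((hu x).deriv).symm
    rw [this]; exact (measurable_deriv u).aestronglyMeasurable
  have h1 := intg_uE z u hcu hu2
  have h2 := intg_u'S z u' hmu' hu'2
  have hint : Integrable (fun x =>
      u x * Real.exp (-|x - z|) + u' x * (-Real.sign (x - z) * Real.exp (-|x - z|))) :=
    h1.add h2
  rw [← integral_add_compl (measurableSet_Iic (a := z)) hint, compl_Iic]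
  -- Ioi part
  have hIoi : ∫ x in Ioi z,
      (u x * Real.exp (-|x - z|) + u' x * (-Real.sign (x - z) * Real.exp (-|x - z|))) = u z := by
    have hcongr : ∀ x ∈ Ioi z,
        (u x * Real.exp (-|x - z|) + u' x * (-Real.sign (x - z) * Real.exp (-|x - z|)))
          = (u x - u' x) * Real.exp (z - x) := by
      intro x hx
      have hxz : 0 < x - z := by simpa using hx
      rw [Real.sign_of_pos hxz, abs_of_pos hxz]
      ring_nf
    rw [setIntegral_congr_fun measurableSet_Ioi hcongr]
    have hderiv : ∀ x ∈ Ici z, HasDerivAt (fun y => -(u y) * Real.exp (z - y))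
        ((u x - u' x) * Real.exp (z - x)) x := by
      intro x _
      have he : HasDerivAt (fun y : ℝ => Real.exp (z - y)) (-Real.exp (z - x)) x := by
        have h0 : HasDerivAt (fun y : ℝ => z - y) (-1) x := by
          simpa using (hasDerivAt_id x).const_sub z
        simpa using h0.exp
      have := (hu x).neg.mul he
      exact this.congr_deriv (by simp only [Pi.neg_apply]; ring)
    have hfin : IntegrableOn (fun x => (u x - u' x) * Real.exp (z - x)) (Ioi z) := by
      refine hint.integrableOn.congr_fun ?_ measurableSet_Ioi
      intro x hx
      exact hcongr x hx
    have htend : Filter.Tendsto (fun y => -(u y) * Real.exp (z - y)) Filter.atTop (nhds 0) := by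
      have he : Filter.Tendsto (fun y : ℝ => Real.exp (z - y)) Filter.atTop (nhds 0) := by
        have h1 : Filter.Tendsto (fun y : ℝ => z - y) Filter.atTop Filter.atBot := by
          apply tendsto_atBot_add_const_left _ z
          exact tendsto_neg_atTop_atBot
        exact Real.tendsto_exp_atBot.comp h1
      simpa using ht.neg.mul he
    have := integral_Ioi_of_hasDerivAt_of_tendsto' hderiv hfin htend
    rw [this]
    simp
  -- Iic part
  have hIic : ∫ x in Iic z,
      (u x * Real.exp (-|x - z|) + u' x * (-Real.sign (x - z) * Real.exp (-|x - z|))) = u z := by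
    have hcongr : ∀ x ∈ Iio z,
        (u x * Real.exp (-|x - z|) + u' x * (-Real.sign (x - z) * Real.exp (-|x - z|)))
          = (u x + u' x) * Real.exp (x - z) := by
      intro x hx
      have hxz : x - z < 0 := by simpa [sub_neg] using hx
      rw [Real.sign_of_neg hxz, abs_of_neg hxz]
      ring_nf
    have hderiv : ∀ x ∈ Iic z, HasDerivAt (fun y => u y * Real.exp (y - z))
        ((u x + u' x) * Real.exp (x - z)) x := by
      intro x _
      have he : HasDerivAt (fun y : ℝ => Real.exp (y - z)) (Real.exp (x - z)) x := by
        have h0 : HasDerivAt (fun y : ℝ => y - z) 1 x := by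
          simpa using (hasDerivAt_id x).sub_const z
        simpa using h0.exp
      have := (hu x).mul he
      exact this.congr_deriv (by ring)
    have hfin : IntegrableOn (fun x => (u x + u' x) * Real.exp (x - z)) (Iic z) := by
      rw [integrableOn_Iic_iff_integrableOn_Iio]
      refine (hint.integrableOn.mono_set Iio_subset_Iic_self).congr_fun ?_ measurableSet_Iio
      intro x hx
      exact hcongr x hx
    have htend : Filter.Tendsto (fun y => u y * Real.exp (y - z)) Filter.atBot (nhds 0) := by
      have he : Filter.Tendsto (fun y : ℝ => Real.exp (y - z)) Filter.atBot (nhds 0) := by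
        have h1 : Filter.Tendsto (fun y : ℝ => y - z) Filter.atBot Filter.atBot := by
          apply tendsto_atBot_add_const_right _ (-z) tendsto_id
        exact Real.tendsto_exp_atBot.comp h1
      simpa using hb.mul he
    have heq := integral_Iic_of_hasDerivAt_of_tendsto' hderiv hfin htend
    rw [integral_Iic_eq_integral_Iio, setIntegral_congr_fun measurableSet_Iio hcongr,
      ← integral_Iic_eq_integral_Iio, heq]
    simp
  rw [hIic, hIoi]
  ring

end Pairing

section PeakPair

noncomputable def pp (p q : ℝ) : ℝ → ℝ := fun x =>
  Real.exp (-|x - p|) * Real.exp (-|x - q|)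
    + (Real.sign (x - p) * Real.sign (x - q)) * (Real.exp (-|x - p|) * Real.exp (-|x - q|))

lemma intg_pp (p q : ℝ) : Integrable (pp p q) := by
  have hm : AEStronglyMeasurable (pp p q) := by
    have hE : ∀ r : ℝ, Measurable fun x : ℝ => Real.exp (-|x - r|) := fun r =>
      (Real.continuous_exp.comp (continuous_abs.comp (continuous_id.sub continuous_const)).neg).measurable
    exact (((hE p).mul (hE q)).add
      (((msign.comp (measurable_id.sub_const p)).mul (msign.comp (measurable_id.sub_const q))).mul
        ((hE p).mul (hE q)))).aestronglyMeasurable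
  refine ((integrable_E p).const_mul 2).mono' hm (Filter.Eventually.of_forall fun x => ?_)
  have h1 : Real.exp (-|x - q|) ≤ 1 := Real.exp_le_one_iff.mpr (neg_nonpos.mpr (abs_nonneg _))
  have h2 := Real.exp_pos (-|x - q|)
  have h3 := Real.exp_pos (-|x - p|)
  have h4 := abs_sign_le (x - p)
  have h5 := abs_sign_le (x - q)
  have h6 := abs_nonneg (Real.sign (x - p))
  have h7 := abs_nonneg (Real.sign (x - q))
  rw [Real.norm_eq_abs]
  refine (abs_add_le _ _).trans ?_
  simp only [abs_mul, abs_of_pos h2, abs_of_pos h3]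
  have h8 : |Real.sign (x - p)| * |Real.sign (x - q)| ≤ 1 := by nlinarith
  nlinarith [mul_le_mul_of_nonneg_left h1 h3.le,
    mul_le_mul_of_nonneg_right h8 (mul_pos h3 h2).le,
    mul_nonneg h6 h7]

lemma peak_pair_le {p q : ℝ} (hpq : p ≤ q) : ∫ x, pp p q x = 2 * Real.exp (-|p - q|) := by
  have hint := intg_pp p q
  rw [← integral_add_compl (measurableSet_Iic (a := q)) hint, compl_Iic]
  have hIoi : ∫ x in Ioi q, pp p q x = Real.exp (p - q) := by
    have hcongr : ∀ x ∈ Ioi q, pp p q x = 2 * Real.exp ((p + q) - 2*x) := by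
      intro x hx
      have hxq : 0 < x - q := by simpa using hx
      have hxp : 0 < x - p := by linarith [mem_Ioi.mp hx]
      unfold pp
      rw [Real.sign_of_pos hxq, Real.sign_of_pos hxp, abs_of_pos hxq, abs_of_pos hxp,
        ← Real.exp_add]
      ring_nf
    rw [setIntegral_congr_fun measurableSet_Ioi hcongr, MeasureTheory.integral_const_mul, int_exp_Ioi]
    rw [show (p + q) - 2*q = p - q by ring]
    ring
  have hIic : ∫ x in Iic q, pp p q x = Real.exp (p - q) := by
    have hsplit : Iic p ∪ Ioc p q = Iic q := Iic_union_Ioc_eq_Iic hpq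
    rw [← hsplit, setIntegral_union (Iic_disjoint_Ioc le_rfl) measurableSet_Ioc
      (hint.integrableOn) (hint.integrableOn)]
    have hIicp : ∫ x in Iic p, pp p q x = Real.exp (p - q) := by
      have hcongr : ∀ x ∈ Iio p, pp p q x = 2 * Real.exp (2*x - (p + q)) := by
        intro x hx
        have hxp : x - p < 0 := by simpa [sub_neg] using hx
        have hxq : x - q < 0 := by have := mem_Iio.mp hx; simp [sub_neg]; linarith
        unfold pp
        rw [Real.sign_of_neg hxq, Real.sign_of_neg hxp, abs_of_neg hxq, abs_of_neg hxp,
          ← Real.exp_add]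
        ring_nf
      rw [integral_Iic_eq_integral_Iio, setIntegral_congr_fun measurableSet_Iio hcongr,
        ← integral_Iic_eq_integral_Iio, MeasureTheory.integral_const_mul, int_exp_Iic]
      rw [show 2*p - (p + q) = p - q by ring]
      ring
    have hIoc : ∫ x in Ioc p q, pp p q x = 0 := by
      rw [integral_Ioc_eq_integral_Ioo]
      rw [setIntegral_congr_fun measurableSet_Ioo (g := fun _ => (0:ℝ)) ?_, integral_zero]
      intro x hx
      have hxp : 0 < x - p := by simpa using hx.1
      have hxq : x - q < 0 := by simp [sub_neg]; exact hx.2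
      unfold pp
      rw [Real.sign_of_pos hxp, Real.sign_of_neg hxq]
      ring
    rw [hIicp, hIoc]
    ring
  rw [hIic, hIoi, abs_of_nonpos (by linarith : p - q ≤ 0)]
  rw [show -(p - q) = q - p by ring]
  rw [show p - q = -(q - p) by ring]
  ring

lemma peak_pair (p q : ℝ) : ∫ x, pp p q x = 2 * Real.exp (-|p - q|) := by
  rcases le_total p q with h | h
  · exact peak_pair_le h
  · have hswap : pp p q = pp q p := by
      funext x; unfold pp; ring
    rw [hswap, peak_pair_le h, abs_sub_comm]

end PeakPair

theorem multipeakon_global_identity (N : ℕ) (a : Fin N → ℝ)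
    (ha : ∀ i, 0 < a i) :
    ∃ C > 0, ∀ (L : ℝ) (z : Fin N → ℝ), 0 < L →
      (∀ i j : Fin N, i ≠ j → L/2 ≤ |z i - z j|) →
      ∀ (u u' : ℝ → ℝ), (∀ x, HasDerivAt u (u' x) x) →
        Integrable (fun x => (u x)^2) → Integrable (fun x => (u' x)^2) →
        Filter.Tendsto u Filter.atTop (nhds 0) →
        Filter.Tendsto u Filter.atBot (nhds 0) →
        |(∫ x : ℝ, ((u x)^2 + (u' x)^2)) - (∑ i, 2 * (a i)^2)
            - ((∫ x : ℝ, ((u x - ∑ i, a i * Real.exp (-|x - z i|))^2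
                + (u' x - ∑ i, -(Real.sign (x - z i)) * a i * Real.exp (-|x - z i|))^2))
              + 4 * ∑ i, a i * (u (z i) - a i))|
          ≤ C * Real.exp (-L/4) := by
  refine ⟨2 * (∑ i, a i)^2 + 1, by positivity, ?_⟩
  intro L z hL hsep u u' hu hu2 hu'2 ht hb
  have hcu : Continuous u := by
    rw [continuous_iff_continuousAt]; exact fun x => (hu x).continuousAt
  have hmu' : AEStronglyMeasurable u' := by
    have : u' = deriv u := funext fun x => ((hu x).deriv).symm
    rw [this]; exact (measurable_deriv u).aestronglyMeasurable
  set h : ℝ → ℝ := fun x => ∑ i, a i * (u x * Real.exp (-|x - z i|)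
    + u' x * (-Real.sign (x - z i) * Real.exp (-|x - z i|))) with hh
  set k : ℝ → ℝ := fun x => ∑ i, ∑ j, (a i * a j) * pp (z i) (z j) x with hk
  have hterm : ∀ i : Fin N, Integrable (fun x => a i * (u x * Real.exp (-|x - z i|)
      + u' x * (-Real.sign (x - z i) * Real.exp (-|x - z i|)))) := fun i =>
    ((intg_uE (z i) u hcu hu2).add (intg_u'S (z i) u' hmu' hu'2)).const_mul (a i)
  have hppterm : ∀ i j : Fin N, Integrable (fun x => (a i * a j) * pp (z i) (z j) x) :=
    fun i j => (intg_pp (z i) (z j)).const_mul _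
  have h_h : Integrable h := integrable_finset_sum _ (fun i _ => hterm i)
  have h_k : Integrable k :=
    integrable_finset_sum _ (fun i _ => integrable_finset_sum _ (fun j _ => hppterm i j))
  have hpt : ∀ x, (u x - ∑ i, a i * Real.exp (-|x - z i|))^2
      + (u' x - ∑ i, -(Real.sign (x - z i)) * a i * Real.exp (-|x - z i|))^2
      = ((u x)^2 + (u' x)^2) - 2 * h x + k x := by
    intro x
    have e1 : u x * (∑ i, a i * Real.exp (-|x - z i|))
        + u' x * (∑ i, -(Real.sign (x - z i)) * a i * Real.exp (-|x - z i|)) = h x := by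
      rw [hh, Finset.mul_sum, Finset.mul_sum, ← Finset.sum_add_distrib]
      exact Finset.sum_congr rfl fun i _ => by ring
    have e2 : (∑ i, a i * Real.exp (-|x - z i|)) * (∑ j, a j * Real.exp (-|x - z j|))
        + (∑ i, -(Real.sign (x - z i)) * a i * Real.exp (-|x - z i|))
          * (∑ j, -(Real.sign (x - z j)) * a j * Real.exp (-|x - z j|)) = k x := by
      rw [hk, Finset.sum_mul_sum, Finset.sum_mul_sum, ← Finset.sum_add_distrib]
      refine Finset.sum_congr rfl fun i _ => ?_
      rw [← Finset.sum_add_distrib]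
      refine Finset.sum_congr rfl fun j _ => ?_
      unfold pp
      ring
    linear_combination (-2 : ℝ) * e1 + e2
  have hEval : (∫ x : ℝ, ((u x - ∑ i, a i * Real.exp (-|x - z i|))^2
      + (u' x - ∑ i, -(Real.sign (x - z i)) * a i * Real.exp (-|x - z i|))^2))
      = (∫ x : ℝ, ((u x)^2 + (u' x)^2)) - 2 * (∫ x, h x) + ∫ x, k x := by
    rw [integral_congr_ae (Filter.Eventually.of_forall hpt)]
    have i0 : Integrable (fun x => (u x)^2 + (u' x)^2) := hu2.add hu'2
    have i3 : Integrable (fun x => 2 * h x) := h_h.const_mul 2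
    have i1 : Integrable (fun x => (u x)^2 + (u' x)^2 - 2 * h x) := i0.sub i3
    rw [integral_add i1 h_k, integral_sub i0 i3, MeasureTheory.integral_const_mul]
  have hH : ∫ x, h x = ∑ i, a i * (2 * u (z i)) := by
    rw [hh, integral_finset_sum _ (fun i _ => hterm i)]
    exact Finset.sum_congr rfl fun i _ => by
      rw [MeasureTheory.integral_const_mul, pairing (z i) u u' hu hu2 hu'2 ht hb]
  have hK : ∫ x, k x = ∑ i, ∑ j, (a i * a j) * (2 * Real.exp (-|z i - z j|)) := by
    rw [hk, integral_finset_sum _ (fun i _ => integrable_finset_sum _ (fun j _ => hppterm i j))]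
    refine Finset.sum_congr rfl fun i _ => ?_
    rw [integral_finset_sum _ (fun j _ => hppterm i j)]
    exact Finset.sum_congr rfl fun j _ => by
      rw [MeasureTheory.integral_const_mul, peak_pair]
  rw [hEval, hH, hK]
  -- algebraic simplification of the expression inside the absolute value
  have e3 : ∑ i, a i * (u (z i) - a i) = (∑ i, a i * u (z i)) - ∑ i, a i * a i := by
    rw [← Finset.sum_sub_distrib]
    exact Finset.sum_congr rfl fun i _ => by ring
  have e4 : ∑ i, a i * (2 * u (z i)) = 2 * ∑ i, a i * u (z i) := by
    rw [Finset.mul_sum]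
    exact Finset.sum_congr rfl fun i _ => by ring
  have e5 : (∑ i, 2 * (a i)^2) = 2 * ∑ i, a i * a i := by
    rw [Finset.mul_sum]
    exact Finset.sum_congr rfl fun i _ => by ring
  have hXval : (∫ x : ℝ, ((u x)^2 + (u' x)^2)) - (∑ i, 2 * (a i)^2)
      - (((∫ x : ℝ, ((u x)^2 + (u' x)^2)) - 2 * (∑ i, a i * (2 * u (z i)))
          + ∑ i, ∑ j, (a i * a j) * (2 * Real.exp (-|z i - z j|)))
        + 4 * ∑ i, a i * (u (z i) - a i))
      = - ∑ i, ∑ j ∈ Finset.univ.erase i, (a i * a j) * (2 * Real.exp (-|z i - z j|)) := by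
    have hsplit : ∑ i, ∑ j, (a i * a j) * (2 * Real.exp (-|z i - z j|))
        = ∑ i, (2 * (a i)^2 + ∑ j ∈ Finset.univ.erase i, (a i * a j) * (2 * Real.exp (-|z i - z j|))) := by
      refine Finset.sum_congr rfl fun i _ => ?_
      rw [← Finset.add_sum_erase _ _ (Finset.mem_univ i)]
      congr 1
      simp [Real.exp_zero]
      ring
    rw [hsplit, e3, e4, e5, Finset.sum_add_distrib, e5]
    ring
  rw [hXval, abs_neg]
  have hnonneg : ∀ (i : Fin N) (j : Fin N), (0:ℝ) ≤ (a i * a j) * (2 * Real.exp (-|z i - z j|)) :=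
    fun i j => mul_nonneg (mul_pos (ha i) (ha j)).le (by positivity)
  rw [abs_of_nonneg (Finset.sum_nonneg fun i _ => Finset.sum_nonneg fun j _ => hnonneg i j)]
  have step1 : ∑ i, ∑ j ∈ Finset.univ.erase i, (a i * a j) * (2 * Real.exp (-|z i - z j|))
      ≤ ∑ i : Fin N, ∑ j : Fin N, (a i * a j) * (2 * Real.exp (-(L/2))) := by
    refine Finset.sum_le_sum fun i _ => ?_
    refine le_trans (Finset.sum_le_sum fun j hj => ?_)
      (Finset.sum_le_sum_of_subset_of_nonneg (Finset.subset_univ _) fun j _ _ =>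
        mul_nonneg (mul_pos (ha i) (ha j)).le (by positivity))
    have hji : j ≠ i := Finset.ne_of_mem_erase hj
    have hsep' := hsep i j (Ne.symm hji)
    have : Real.exp (-|z i - z j|) ≤ Real.exp (-(L/2)) :=
      Real.exp_le_exp.mpr (neg_le_neg hsep')
    have hpos : (0:ℝ) ≤ a i * a j := le_of_lt (mul_pos (ha i) (ha j))
    nlinarith
  have step2 : ∑ i : Fin N, ∑ j : Fin N, (a i * a j) * (2 * Real.exp (-(L/2)))
      = 2 * Real.exp (-(L/2)) * (∑ i, a i)^2 := by
    have : (∑ i, a i) * (∑ j, a j) = ∑ i : Fin N, ∑ j : Fin N, a i * a j :=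
      Finset.sum_mul_sum _ _ _ _
    rw [sq, this, Finset.mul_sum]
    refine Finset.sum_congr rfl fun i _ => ?_
    rw [Finset.mul_sum]
    exact Finset.sum_congr rfl fun j _ => by ring
  refine le_trans step1 (le_trans (le_of_eq step2) ?_)
  have hexp : Real.exp (-(L/2)) ≤ Real.exp (-L/4) := by
    apply Real.exp_le_exp.mpr
    rw [neg_div]
    linarith
  have hA : (0:ℝ) ≤ (∑ i, a i)^2 := sq_nonneg _
  nlinarith [Real.exp_pos (-L/4), Real.exp_pos (-(L/2))]
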